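/- arXiv:1711.06428 — 3 statements merged into one kernel-verified Lean document; each statement's English description precedes it below -/
import Mathlib

section
/- Let g : 2^N → ℝ be monotone submodular with g(∅)=0, let S be a set of size k, and index S = {s_1,…,s_k} greedily with respect to g (i.e., g(s_i | {s_1,…,s_{i-1}}) ≥ g(s_j | {s_1,…,s_{i-1}}) for every j > i). Then for any k₁ ≤ k, the truncated set S' = {s_1,…,s_{k₁}} satisfies g(S') ≥ (k₁/k)·g(S). -/
def Submodular {α : Type*} [DecidableEq α] (f : Finset α → ℝ) : Prop :=
  ∀ A B : Finset α, f (A ∪ B) + f (A ∩ B) ≤ f A + f B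

def MonotoneFn {α : Type*} (f : Finset α → ℝ) : Prop :=
  ∀ A B : Finset α, A ⊆ B → f A ≤ f B

/-- If `S` of size `k` is indexed greedily w.r.t. `g`, then the truncated set of the
first `k₁` elements has value at least `(k₁/k)·g(S)`. -/
theorem greedy_truncation {α : Type*} [DecidableEq α]
    (g : Finset α → ℝ) (hmono : MonotoneFn g) (hsub : Submodular g) (hempty : g ∅ = 0)
    (k : ℕ) (hk : 0 < k) (s : Fin k → α) (hinj : Function.Injective s)
    (pref : ℕ → Finset α)
    (hpref : ∀ t : ℕ, pref t = Finset.image s (Finset.univ.filter (fun i : Fin k => (i : ℕ) < t)))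
    (hgreedy : ∀ i j : Fin k, i < j →
      g (insert (s j) (pref i)) - g (pref i) ≤ g (insert (s i) (pref i)) - g (pref i))
    (k₁ : ℕ) (hk₁ : k₁ ≤ k) :
    ((k₁ : ℝ) / k) * g (Finset.image s Finset.univ) ≤ g (pref k₁) := by
  have hpref0 : pref 0 = ∅ := by rw [hpref]; simp
  have hmonopref : ∀ a b : ℕ, a ≤ b → pref a ⊆ pref b := by
    intro a b hab
    rw [hpref, hpref]
    apply Finset.image_subset_image
    apply Finset.monotone_filter_right
    intro i _ hi
    exact lt_of_lt_of_le hi hab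
  have hnotmem : ∀ i : Fin k, s i ∉ pref (i : ℕ) := by
    intro i hi
    rw [hpref] at hi
    obtain ⟨j, hj, hji⟩ := Finset.mem_image.mp hi
    have hji' : j = i := hinj hji
    rw [Finset.mem_filter] at hj
    subst hji'
    exact absurd hj.2 (lt_irrefl _)
  have hsucc : ∀ i : Fin k, pref ((i : ℕ) + 1) = insert (s i) (pref (i : ℕ)) := by
    intro i
    rw [hpref, hpref]
    have hset : (Finset.univ.filter (fun m : Fin k => (m : ℕ) < (i : ℕ) + 1)) =
        insert i (Finset.univ.filter (fun m : Fin k => (m : ℕ) < (i : ℕ))) := by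
      ext m
      simp [Fin.ext_iff]
      omega
    rw [hset, Finset.image_insert]
  have hprefk : pref k = Finset.image s Finset.univ := by
    rw [hpref]
    congr 1
    rw [Finset.filter_true_of_mem]
    intro i _
    exact i.isLt
  have hdim : ∀ (A B : Finset α) (x : α), A ⊆ B → x ∉ B →
      g (insert x B) - g B ≤ g (insert x A) - g A := by
    intro A B x hAB hxB
    have h := hsub (insert x A) B
    have h1 : insert x A ∪ B = insert x B := by
      rw [Finset.insert_union, Finset.union_eq_right.mpr hAB]
    have h2 : insert x A ∩ B = A := by
      rw [Finset.insert_inter_of_notMem hxB, Finset.inter_eq_left.mpr hAB]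
    rw [h1, h2] at h
    linarith
  set δ : ℕ → ℝ := fun n => g (pref (n + 1)) - g (pref n) with hδ
  have hδmono : ∀ i j : ℕ, i < j → j < k → δ j ≤ δ i := by
    intro i j hij hjk
    have hik : i < k := hij.trans hjk
    have hδi : δ i = g (insert (s ⟨i, hik⟩) (pref i)) - g (pref i) := by
      simp only [hδ]
      rw [hsucc ⟨i, hik⟩]
    have hδj : δ j = g (insert (s ⟨j, hjk⟩) (pref j)) - g (pref j) := by
      simp only [hδ]
      rw [hsucc ⟨j, hjk⟩]
    rw [hδi, hδj]
    have h1 : g (insert (s ⟨j, hjk⟩) (pref j)) - g (pref j) ≤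
        g (insert (s ⟨j, hjk⟩) (pref i)) - g (pref i) :=
      hdim _ _ _ (hmonopref i j hij.le) (hnotmem ⟨j, hjk⟩)
    have h2 := hgreedy ⟨i, hik⟩ ⟨j, hjk⟩ (Fin.mk_lt_mk.mpr hij)
    linarith
  have htel : ∀ t : ℕ, ∑ n ∈ Finset.range t, δ n = g (pref t) := by
    intro t
    rw [Finset.sum_range_sub (fun n => g (pref n)), hpref0, hempty, sub_zero]
  have hkey : (k₁ : ℝ) * g (pref k) ≤ (k : ℝ) * g (pref k₁) := by
    rw [← htel k, ← htel k₁]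
    have hsplit : ∑ n ∈ Finset.range k, δ n =
        ∑ n ∈ Finset.range k₁, δ n + ∑ n ∈ Finset.Ico k₁ k, δ n := by
      rw [Finset.range_eq_Ico, ← Finset.sum_Ico_consecutive _ (Nat.zero_le k₁) hk₁,
        ← Finset.range_eq_Ico]
    rw [hsplit]
    have hcross : (k₁ : ℝ) * ∑ n ∈ Finset.Ico k₁ k, δ n ≤
        ((k : ℝ) - k₁) * ∑ n ∈ Finset.range k₁, δ n := by
      have h1 : ∀ i ∈ Finset.range k₁,
          ∑ n ∈ Finset.Ico k₁ k, δ n ≤ ((k : ℝ) - k₁) * δ i := by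
        intro i hi
        have hi' := Finset.mem_range.mp hi
        have h := Finset.sum_le_card_nsmul (Finset.Ico k₁ k) δ (δ i) (fun j hj => by
          have hj' := Finset.mem_Ico.mp hj
          exact hδmono i j (lt_of_lt_of_le hi' hj'.1) hj'.2)
        rw [Nat.card_Ico] at h
        calc ∑ n ∈ Finset.Ico k₁ k, δ n ≤ (k - k₁) • δ i := h
          _ = ((k - k₁ : ℕ) : ℝ) * δ i := by rw [nsmul_eq_mul]
          _ = ((k : ℝ) - k₁) * δ i := by rw [Nat.cast_sub hk₁]
      calc (k₁ : ℝ) * ∑ n ∈ Finset.Ico k₁ k, δ n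
          = ∑ _i ∈ Finset.range k₁, ∑ n ∈ Finset.Ico k₁ k, δ n := by
            rw [Finset.sum_const, Finset.card_range, nsmul_eq_mul]
        _ ≤ ∑ i ∈ Finset.range k₁, ((k : ℝ) - k₁) * δ i := Finset.sum_le_sum h1
        _ = ((k : ℝ) - k₁) * ∑ n ∈ Finset.range k₁, δ n := by rw [Finset.mul_sum]
    have hk₁' : (k₁ : ℝ) ≤ (k : ℝ) := Nat.cast_le.mpr hk₁
    nlinarith [hcross]
  rw [← hprefk, div_mul_eq_mul_div, div_le_iff₀ (by exact_mod_cast hk : (0 : ℝ) < k)]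
  linarith [hkey]
end

section
/- Let F be the multilinear extension of a monotone submodular function f : 2^N → ℝ with f(∅)=0. For any x ∈ [0,1]^N and any scalar c ∈ [0,1], F(c·x) ≥ c·F(x). -/
noncomputable def multilinear {α : Type*} [Fintype α] [DecidableEq α]
    (f : Finset α → ℝ) (x : α → ℝ) : ℝ :=
  ∑ S : Finset α, f S * ((∏ i ∈ S, x i) * ∏ j ∈ Sᶜ, (1 - x j))

open Finset

noncomputable def Gfun {α : Type*} [DecidableEq α] (f : Finset α → ℝ) (c : ℝ)
    (T : Finset α) : ℝ :=
  ∑ S ∈ T.powerset, c ^ S.card * (1 - c) ^ (T \ S).card * f S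

lemma weights_sum {α : Type*} [DecidableEq α] (c : ℝ) (T : Finset α) :
    ∑ S ∈ T.powerset, c ^ S.card * (1 - c) ^ (T \ S).card = 1 := by
  have h := Finset.prod_add (fun _ : α => c) (fun _ : α => 1 - c) T
  simp only [Finset.prod_const] at h
  rw [← h]
  simp

lemma Gfun_key {α : Type*} [DecidableEq α] (f : Finset α → ℝ)
    (hsub : Submodular f) (hempty : f ∅ = 0)
    (c : ℝ) (hc0 : 0 ≤ c) (hc1 : c ≤ 1) (T : Finset α) :
    c * f T ≤ Gfun f c T := by
  induction T using Finset.induction_on with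
  | empty => simp [Gfun, hempty]
  | @insert a T ha ih =>
    have hwnn : ∀ S ∈ T.powerset, (0:ℝ) ≤ c ^ S.card * (1 - c) ^ (T \ S).card :=
      fun S _ => mul_nonneg (pow_nonneg hc0 _) (pow_nonneg (by linarith) _)
    have hG : Gfun f c (insert a T)
        = (1 - c) * Gfun f c T
          + c * ∑ S ∈ T.powerset, c ^ S.card * (1 - c) ^ (T \ S).card * f (insert a S) := by
      rw [Gfun, Finset.sum_powerset_insert ha, Gfun, Finset.mul_sum, Finset.mul_sum]
      congr 1
      · apply Finset.sum_congr rfl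
        intro S hS
        rw [Finset.mem_powerset] at hS
        have h1 : (insert a T) \ S = insert a (T \ S) := by
          rw [Finset.insert_sdiff_of_notMem _ (fun h => ha (hS h))]
        have h3 : a ∉ T \ S := fun h => ha (Finset.mem_sdiff.mp h).1
        rw [h1, Finset.card_insert_of_notMem h3]
        ring
      · apply Finset.sum_congr rfl
        intro S hS
        rw [Finset.mem_powerset] at hS
        have haS : a ∉ S := fun h => ha (hS h)
        have h2 : (insert a T) \ (insert a S) = T \ S := by
          ext b
          simp only [Finset.mem_sdiff, Finset.mem_insert]
          constructor
          · rintro ⟨hb1 | hb1, hb2⟩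
            · exact absurd (Or.inl hb1) hb2
            · exact ⟨hb1, fun hb => hb2 (Or.inr hb)⟩
          · rintro ⟨hb1, hb2⟩
            refine ⟨Or.inr hb1, ?_⟩
            rintro (rfl | hb)
            · exact ha hb1
            · exact hb2 hb
        rw [h2, Finset.card_insert_of_notMem haS]
        ring
    set Δ := f (insert a T) - f T with hΔ
    have hmarg : ∀ S ∈ T.powerset, f S + Δ ≤ f (insert a S) := by
      intro S hS
      rw [Finset.mem_powerset] at hS
      have h := hsub (insert a S) T
      have hu : insert a S ∪ T = insert a T := by
        rw [Finset.insert_union, Finset.union_eq_right.mpr hS]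
      have hi : insert a S ∩ T = S := by
        rw [Finset.insert_inter_of_notMem ha, Finset.inter_eq_left.mpr hS]
      rw [hu, hi] at h
      simp only [hΔ]; linarith
    have hsum : Gfun f c T + Δ
        ≤ ∑ S ∈ T.powerset, c ^ S.card * (1 - c) ^ (T \ S).card * f (insert a S) := by
      have : ∑ S ∈ T.powerset, c ^ S.card * (1 - c) ^ (T \ S).card * (f S + Δ)
          ≤ ∑ S ∈ T.powerset, c ^ S.card * (1 - c) ^ (T \ S).card * f (insert a S) := by
        apply Finset.sum_le_sum
        intro S hS
        exact mul_le_mul_of_nonneg_left (hmarg S hS) (hwnn S hS)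
      calc Gfun f c T + Δ
          = ∑ S ∈ T.powerset, c ^ S.card * (1 - c) ^ (T \ S).card * (f S + Δ) := by
            rw [Gfun]
            simp only [mul_add, Finset.sum_add_distrib, ← Finset.sum_mul, weights_sum]
            ring
        _ ≤ _ := this
    have : c * f (insert a T) = c * f T + c * Δ := by rw [hΔ]; ring
    rw [this, hG]
    nlinarith [ih, hsum]

lemma expand {α : Type*} [Fintype α] [DecidableEq α] (f : Finset α → ℝ) (c : ℝ) (x : α → ℝ) :
    multilinear f (fun i => c * x i)
      = ∑ T : Finset α, ((∏ i ∈ T, x i) * ∏ j ∈ Tᶜ, (1 - x j)) * Gfun f c T := by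
  have step1 : ∀ S : Finset α,
      f S * ((∏ i ∈ S, c * x i) * ∏ j ∈ Sᶜ, (1 - c * x j))
        = ∑ U ∈ Sᶜ.powerset,
            f S * c ^ S.card * (1 - c) ^ U.card *
              ((∏ i ∈ S, x i) * (∏ i ∈ U, x i) * ∏ j ∈ Sᶜ \ U, (1 - x j)) := by
    intro S
    have hp : ∏ j ∈ Sᶜ, (1 - c * x j)
        = ∑ U ∈ Sᶜ.powerset, (∏ i ∈ U, (1 - c) * x i) * ∏ j ∈ Sᶜ \ U, (1 - x j) := by
      rw [← Finset.prod_add]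
      apply Finset.prod_congr rfl
      intro j _
      ring
    rw [hp, Finset.mul_sum, Finset.mul_sum]
    apply Finset.sum_congr rfl
    intro U _
    rw [Finset.prod_mul_distrib, Finset.prod_const, Finset.prod_mul_distrib, Finset.prod_const]
    ring
  unfold multilinear
  simp_rw [step1]
  have e1 := Finset.sum_sigma' (Finset.univ : Finset (Finset α)) (fun S => Sᶜ.powerset)
    (fun S U => f S * c ^ S.card * (1 - c) ^ U.card *
      ((∏ i ∈ S, x i) * (∏ i ∈ U, x i) * ∏ j ∈ Sᶜ \ U, (1 - x j)))
  rw [e1]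
  have e0 : ∀ T : Finset α, ((∏ i ∈ T, x i) * ∏ j ∈ Tᶜ, (1 - x j)) * Gfun f c T
      = ∑ S ∈ T.powerset, ((∏ i ∈ T, x i) * ∏ j ∈ Tᶜ, (1 - x j)) *
          (c ^ S.card * (1 - c) ^ (T \ S).card * f S) := by
    intro T; rw [Gfun, Finset.mul_sum]
  simp_rw [e0]
  have e2 := Finset.sum_sigma' (Finset.univ : Finset (Finset α)) (fun T => T.powerset)
    (fun T S => ((∏ i ∈ T, x i) * ∏ j ∈ Tᶜ, (1 - x j)) *
      (c ^ S.card * (1 - c) ^ (T \ S).card * f S))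
  rw [e2]
  apply Finset.sum_nbij' (fun p => ⟨p.1 ∪ p.2, p.1⟩)
    (fun q => (⟨q.2, q.1 \ q.2⟩ : Σ _ : Finset α, Finset α))
  · rintro ⟨S, U⟩ h
    simp only [Finset.mem_sigma, Finset.mem_univ, Finset.mem_powerset] at *
    exact ⟨trivial, Finset.subset_union_left⟩
  · rintro ⟨T, S⟩ h
    simp only [Finset.mem_sigma, Finset.mem_univ, Finset.mem_powerset] at *
    refine ⟨trivial, fun a haTS => ?_⟩
    rw [Finset.mem_compl]
    exact (Finset.mem_sdiff.mp haTS).2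
  · rintro ⟨S, U⟩ h
    simp only [Finset.mem_sigma, Finset.mem_univ, Finset.mem_powerset] at h
    have hd : Disjoint S U := Finset.disjoint_left.mpr (fun a haS haU => by
      have := h.2 haU; simp at this; exact this haS)
    have h1 : (S ∪ U) \ S = U := Finset.union_sdiff_cancel_left hd
    exact Sigma.ext rfl (heq_of_eq h1)
  · rintro ⟨T, S⟩ h
    simp only [Finset.mem_sigma, Finset.mem_univ, Finset.mem_powerset] at h
    exact Sigma.ext (Finset.union_sdiff_of_subset h.2) (heq_of_eq rfl)
  · rintro ⟨S, U⟩ h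
    simp only [Finset.mem_sigma, Finset.mem_univ, Finset.mem_powerset] at h
    have hd : Disjoint S U := Finset.disjoint_left.mpr (fun a haS haU => by
      have := h.2 haU; simp at this; exact this haS)
    have h1 : (S ∪ U) \ S = U := Finset.union_sdiff_cancel_left hd
    have h2 : (S ∪ U)ᶜ = Sᶜ \ U := by
      rw [Finset.compl_union]
      rw [Finset.sdiff_eq_inter_compl]
    have h3 : ∏ i ∈ S ∪ U, x i = (∏ i ∈ S, x i) * ∏ i ∈ U, x i :=
      Finset.prod_union hd
    rw [h1, h2, h3]
    ring

/-- For the multilinear extension `F` of a monotone submodular function,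
`F(c·x) ≥ c·F(x)` for `c ∈ [0,1]` and `x ∈ [0,1]^N`. -/
theorem multilinear_scale {α : Type*} [Fintype α] [DecidableEq α]
    (f : Finset α → ℝ) (hmono : MonotoneFn f) (hsub : Submodular f) (hempty : f ∅ = 0)
    (x : α → ℝ) (hx : ∀ i, 0 ≤ x i ∧ x i ≤ 1)
    (c : ℝ) (hc0 : 0 ≤ c) (hc1 : c ≤ 1) :
    c * multilinear f x ≤ multilinear f (fun i => c * x i) := by
  rw [expand, multilinear, Finset.mul_sum]
  apply Finset.sum_le_sum
  intro T _
  have hw : (0:ℝ) ≤ (∏ i ∈ T, x i) * ∏ j ∈ Tᶜ, (1 - x j) :=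
    mul_nonneg (Finset.prod_nonneg fun i _ => (hx i).1)
      (Finset.prod_nonneg fun j _ => by linarith [(hx j).2])
  calc c * (f T * ((∏ i ∈ T, x i) * ∏ j ∈ Tᶜ, (1 - x j)))
      = ((∏ i ∈ T, x i) * ∏ j ∈ Tᶜ, (1 - x j)) * (c * f T) := by ring
    _ ≤ ((∏ i ∈ T, x i) * ∏ j ∈ Tᶜ, (1 - x j)) * Gfun f c T :=
        mul_le_mul_of_nonneg_left (Gfun_key f hsub hempty c hc0 hc1 T) hw
end

section
/- Let f : 2^N → ℝ be monotone submodular with f(∅)=0, let X^1, …, X^T ⊆ N, and let x = (1/T)·Σ_{t=1}^T 1_{X^t} ∈ [0,1]^N be the average of their indicator vectors. Then the multilinear extension satisfies F(x) ≥ (1 - 1/e)·(1/T)·Σ_{t=1}^T f(X^t). -/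
section Aux
variable {α : Type*} [Fintype α] [DecidableEq α]

lemma weight_nonneg {x : α → ℝ} (h0 : ∀ i, 0 ≤ x i) (h1 : ∀ i, x i ≤ 1) (S : Finset α) :
    0 ≤ (∏ i ∈ S, x i) * ∏ j ∈ Sᶜ, (1 - x j) :=
  mul_nonneg (Finset.prod_nonneg fun i _ => h0 i)
    (Finset.prod_nonneg fun j _ => by linarith [h1 j])

lemma weight_sum (x : α → ℝ) :
    ∑ S : Finset α, (∏ i ∈ S, x i) * ∏ j ∈ Sᶜ, (1 - x j) = 1 := by
  have h := Finset.prod_add x (fun i => 1 - x i) Finset.univ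
  simp only [Finset.powerset_univ] at h
  have h2 : ∀ S : Finset α, Finset.univ \ S = Sᶜ := fun S => (Finset.compl_eq_univ_sdiff S).symm
  calc ∑ S : Finset α, (∏ i ∈ S, x i) * ∏ j ∈ Sᶜ, (1 - x j)
      = ∑ S : Finset α, (∏ i ∈ S, x i) * ∏ j ∈ Finset.univ \ S, (1 - x j) := by
        refine Finset.sum_congr rfl fun S _ => by rw [h2]
    _ = ∏ i ∈ Finset.univ, (x i + (1 - x i)) := h.symm
    _ = 1 := by simp

lemma multilinear_le {f g : Finset α → ℝ} {x : α → ℝ} (h0 : ∀ i, 0 ≤ x i) (h1 : ∀ i, x i ≤ 1)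
    (h : ∀ S, f S ≤ g S) : multilinear f x ≤ multilinear g x :=
  Finset.sum_le_sum fun S _ => mul_le_mul_of_nonneg_right (h S) (weight_nonneg h0 h1 S)

lemma multilinear_add (f g : Finset α → ℝ) (x : α → ℝ) :
    multilinear (fun S => f S + g S) x = multilinear f x + multilinear g x := by
  unfold multilinear
  rw [← Finset.sum_add_distrib]
  exact Finset.sum_congr rfl fun S _ => by ring

lemma multilinear_const (c : ℝ) (x : α → ℝ) : multilinear (fun _ => c) x = c := by
  unfold multilinear
  rw [← Finset.mul_sum, weight_sum, mul_one]

lemma multilinear_zero_pt (f : Finset α → ℝ) : multilinear f (fun _ => 0) = f ∅ := by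
  unfold multilinear
  rw [Finset.sum_eq_single ∅]
  · simp
  · intro S _ hS
    obtain ⟨a, ha⟩ := Finset.nonempty_iff_ne_empty.2 hS
    rw [Finset.prod_eq_zero ha rfl]
    ring
  · simp

lemma mult_update_one (f : Finset α → ℝ) (x : α → ℝ) (e : α) :
    multilinear f (Function.update x e 1) =
      ∑ S ∈ Finset.univ.filter (fun S : Finset α => e ∈ S),
        f S * ((∏ i ∈ S.erase e, x i) * ∏ j ∈ Sᶜ, (1 - x j)) := by
  unfold multilinear
  rw [← Finset.sum_filter_of_ne (p := fun S : Finset α => e ∈ S) ?vanish]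
  case vanish =>
    intro S _ hne
    by_contra he
    apply hne
    rw [Finset.prod_eq_zero (Finset.mem_compl.2 he) (by simp : (1 : ℝ) - Function.update x e 1 e = 0)]
    ring
  refine Finset.sum_congr rfl fun S hS => ?_
  rw [Finset.mem_filter] at hS
  congr 1
  congr 1
  · rw [← Finset.mul_prod_erase _ _ hS.2, Function.update_self, one_mul]
    exact Finset.prod_congr rfl fun i hi =>
      Function.update_of_ne (Finset.ne_of_mem_erase hi) _ _
  · refine Finset.prod_congr rfl fun j hj => ?_
    rw [Function.update_of_ne (by rintro rfl; exact (Finset.mem_compl.1 hj) hS.2) _ _]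

lemma mult_update_zero (f : Finset α → ℝ) (x : α → ℝ) (e : α) :
    multilinear f (Function.update x e 0) =
      ∑ S ∈ Finset.univ.filter (fun S : Finset α => e ∉ S),
        f S * ((∏ i ∈ S, x i) * ∏ j ∈ Sᶜ.erase e, (1 - x j)) := by
  unfold multilinear
  rw [← Finset.sum_filter_of_ne (p := fun S : Finset α => e ∉ S) ?vanish]
  case vanish =>
    intro S _ hne
    by_contra he
    apply hne
    rw [Finset.prod_eq_zero he (Function.update_self e 0 x)]
    ring
  refine Finset.sum_congr rfl fun S hS => ?_
  rw [Finset.mem_filter] at hS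
  congr 1
  congr 1
  · exact Finset.prod_congr rfl fun i hi =>
      Function.update_of_ne (by rintro rfl; exact hS.2 hi) _ _
  · have he : e ∈ Sᶜ := Finset.mem_compl.2 hS.2
    rw [← Finset.mul_prod_erase _ _ he, Function.update_self]
    rw [sub_zero, one_mul]
    exact Finset.prod_congr rfl fun j hj =>
      by rw [Function.update_of_ne (Finset.ne_of_mem_erase hj) _ _]

lemma pin (f : Finset α → ℝ) (x : α → ℝ) (e : α) :
    multilinear f x =
      x e * multilinear f (Function.update x e 1) +
        (1 - x e) * multilinear f (Function.update x e 0) := by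
  rw [mult_update_one, mult_update_zero]
  unfold multilinear
  rw [← Finset.sum_filter_add_sum_filter_not Finset.univ (fun S : Finset α => e ∈ S),
    Finset.mul_sum, Finset.mul_sum]
  congr 1
  · refine Finset.sum_congr rfl fun S hS => ?_
    rw [Finset.mem_filter] at hS
    rw [← Finset.mul_prod_erase _ _ hS.2]
    ring
  · refine Finset.sum_congr rfl fun S hS => ?_
    rw [Finset.mem_filter] at hS
    have he : e ∈ Sᶜ := Finset.mem_compl.2 hS.2
    rw [← Finset.mul_prod_erase _ _ he]
    ring

lemma shift (g : Finset α → ℝ) (x : α → ℝ) (e : α) :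
    multilinear g (Function.update x e 1) =
      multilinear (fun S => g (insert e S)) (Function.update x e 0) := by
  rw [mult_update_one, mult_update_zero]
  refine Finset.sum_nbij' (fun S => S.erase e) (fun S => insert e S) ?_ ?_ ?_ ?_ ?_
  · intro S hS
    rw [Finset.mem_filter] at hS ⊢
    exact ⟨Finset.mem_univ _, Finset.notMem_erase e S⟩
  · intro S hS
    rw [Finset.mem_filter] at hS ⊢
    exact ⟨Finset.mem_univ _, Finset.mem_insert_self e S⟩
  · intro S hS
    rw [Finset.mem_filter] at hS
    exact Finset.insert_erase hS.2
  · intro S hS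
    rw [Finset.mem_filter] at hS
    exact Finset.erase_insert hS.2
  · intro S hS
    rw [Finset.mem_filter] at hS
    rw [Finset.insert_erase hS.2]
    congr 2
    rw [Finset.compl_erase, Finset.erase_insert (by simp [hS.2])]

end Aux

section Key
variable {α : Type*} [Fintype α] [DecidableEq α] {f : Finset α → ℝ}

lemma key_strong (hsub : Submodular f) {p : ℝ} (hp0 : 0 ≤ p) (hp1 : p ≤ 1) (A : Finset α) :
    ∀ y : α → ℝ, (∀ i, 0 ≤ y i) → (∀ i, y i ≤ 1) →
      (1 - p) * multilinear f y + p * multilinear (fun S => f (S ∪ A)) y ≤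
        multilinear f (fun i => if i ∈ A then y i + p * (1 - y i) else y i) := by
  classical
  induction A using Finset.induction_on with
  | empty =>
    intro y _ _
    have h1 : (fun i => if i ∈ (∅ : Finset α) then y i + p * (1 - y i) else y i) = y := by
      funext i; simp
    have h2 : (fun S : Finset α => f (S ∪ ∅)) = f := by
      funext S; rw [Finset.union_empty]
    rw [h1, h2]; ring_nf; rfl
  | @insert e A he ih =>
    intro y h0 h1
    set y1 := Function.update y e 1 with hy1def
    set y0 := Function.update y e 0 with hy0def
    have hy10 : ∀ i, 0 ≤ y1 i := by
      intro i; by_cases hi : i = e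
      · subst hi; simp [hy1def]
      · simp [hy1def, Function.update_of_ne hi]; exact h0 i
    have hy11 : ∀ i, y1 i ≤ 1 := by
      intro i; by_cases hi : i = e
      · subst hi; simp [hy1def]
      · simp [hy1def, Function.update_of_ne hi]; exact h1 i
    have hy00 : ∀ i, 0 ≤ y0 i := by
      intro i; by_cases hi : i = e
      · subst hi; simp [hy0def]
      · simp [hy0def, Function.update_of_ne hi]; exact h0 i
    have hy01 : ∀ i, y0 i ≤ 1 := by
      intro i; by_cases hi : i = e
      · subst hi; simp [hy0def]
      · simp [hy0def, Function.update_of_ne hi]; exact h1 i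
    set z : α → ℝ := fun i => if i ∈ insert e A then y i + p * (1 - y i) else y i with hzdef
    have hze : z e = y e + p * (1 - y e) := by simp [hzdef]
    have hz1 : Function.update z e 1 = fun i => if i ∈ A then y1 i + p * (1 - y1 i) else y1 i := by
      funext i
      by_cases hi : i = e
      · subst hi
        rw [Function.update_self]
        simp [he, hy1def]
      · rw [Function.update_of_ne hi]
        simp only [hzdef, hy1def, Function.update_of_ne hi, Finset.mem_insert]
        by_cases hiA : i ∈ A <;> simp [hiA, hi]
    have hz0 : Function.update z e 0 = fun i => if i ∈ A then y0 i + p * (1 - y0 i) else y0 i := by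
      funext i
      by_cases hi : i = e
      · subst hi
        rw [Function.update_self]
        simp [he, hy0def]
      · rw [Function.update_of_ne hi]
        simp only [hzdef, hy0def, Function.update_of_ne hi, Finset.mem_insert]
        by_cases hiA : i ∈ A <;> simp [hiA, hi]
    -- pin the goal's LHS pieces
    have pinP : multilinear f y
        = y e * multilinear f y1 + (1 - y e) * multilinear f y0 := pin f y e
    -- abbreviations
    set M : ℝ := multilinear (fun S => f (S ∪ insert e A)) y0 with hM
    set N : ℝ := multilinear (fun S => f (S ∪ A)) y0 with hN
    -- H_{A'} y = M
    have pinH : multilinear (fun S => f (S ∪ insert e A)) y = M := by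
      rw [pin (fun S => f (S ∪ insert e A)) y e]
      have s2 : multilinear (fun S => f (S ∪ insert e A)) y1 = M := by
        rw [hy1def, shift (fun S => f (S ∪ insert e A)) y e]
        rw [hM, hy0def]
        congr 1
        funext S
        congr 1
        rw [Finset.insert_union, Finset.insert_eq_self.2 (by simp)]
      rw [s2]; rw [hM]; ring
    -- H_A y1 = M
    have s3 : multilinear (fun S => f (S ∪ A)) y1 = M := by
      rw [hy1def, shift (fun S => f (S ∪ A)) y e, hM, hy0def]
      congr 1
      funext S
      congr 1
      rw [Finset.insert_union, Finset.union_insert]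
    -- P y1 as a multilinear over y0
    have s1 : multilinear f y1 = multilinear (fun S => f (insert e S)) y0 := by
      rw [hy1def, shift f y e, hy0def]
    -- submodularity: P y0 + M ≤ P y1 + N
    have hsubm : multilinear f y0 + M ≤ multilinear f y1 + N := by
      rw [s1, hM, hN, ← multilinear_add, ← multilinear_add]
      refine multilinear_le hy00 hy01 fun S => ?_
      have hint : insert e S ∩ (S ∪ A) = S := by
        ext x
        simp only [Finset.mem_inter, Finset.mem_insert, Finset.mem_union]
        constructor
        · rintro ⟨rfl | hxS, hx2⟩
          · rcases hx2 with h | h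
            · exact h
            · exact absurd h he
          · exact hxS
        · exact fun h => ⟨Or.inr h, Or.inl h⟩
      have huni : insert e S ∪ (S ∪ A) = S ∪ insert e A := by
        ext x
        simp only [Finset.mem_insert, Finset.mem_union]
        tauto
      have := hsub (insert e S) (S ∪ A)
      rw [hint, huni] at this
      linarith
    -- pin the RHS
    have pinZ : multilinear f z
        = (y e + p * (1 - y e)) * multilinear f
            (fun i => if i ∈ A then y1 i + p * (1 - y1 i) else y1 i)
          + ((1 - y e) * (1 - p)) * multilinear f
            (fun i => if i ∈ A then y0 i + p * (1 - y0 i) else y0 i) := by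
      rw [pin f z e, hz1, hz0, hze]
      ring
    have IH1 := ih y1 hy10 hy11
    have IH0 := ih y0 hy00 hy01
    rw [s3] at IH1
    rw [← hN] at IH0
    -- nonneg coefficients
    have hye0 := h0 e
    have hye1 := h1 e
    have hc : (0:ℝ) ≤ y e + p * (1 - y e) := by nlinarith
    have hc' : (0:ℝ) ≤ (1 - y e) * (1 - p) := by nlinarith
    have e1 : (y e + p * (1 - y e)) * ((1 - p) * multilinear f y1 + p * M)
        ≤ (y e + p * (1 - y e)) * multilinear f
            (fun i => if i ∈ A then y1 i + p * (1 - y1 i) else y1 i) :=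
      mul_le_mul_of_nonneg_left IH1 hc
    have e0 : ((1 - y e) * (1 - p)) * ((1 - p) * multilinear f y0 + p * N)
        ≤ ((1 - y e) * (1 - p)) * multilinear f
            (fun i => if i ∈ A then y0 i + p * (1 - y0 i) else y0 i) :=
      mul_le_mul_of_nonneg_left IH0 hc'
    have hE : 0 ≤ p * (1 - p) * (1 - y e) *
        ((multilinear f y1 + N) - (multilinear f y0 + M)) := by
      have : (0:ℝ) ≤ p * (1 - p) * (1 - y e) := by nlinarith
      exact mul_nonneg this (by linarith)
    have ringid : (y e + p * (1 - y e)) * ((1 - p) * multilinear f y1 + p * M)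
        + ((1 - y e) * (1 - p)) * ((1 - p) * multilinear f y0 + p * N)
        - ((1 - p) * (y e * multilinear f y1 + (1 - y e) * multilinear f y0) + p * M)
        = p * (1 - p) * (1 - y e) *
            ((multilinear f y1 + N) - (multilinear f y0 + M)) := by ring
    rw [pinZ, pinP, pinH]
    linarith
end Key

section More
variable {α : Type*} [Fintype α] [DecidableEq α] {f : Finset α → ℝ}

lemma key_lemma (hsub : Submodular f) (hmono : MonotoneFn f) {p : ℝ}
    (hp0 : 0 ≤ p) (hp1 : p ≤ 1) (A : Finset α) {y : α → ℝ}
    (h0 : ∀ i, 0 ≤ y i) (h1 : ∀ i, y i ≤ 1) :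
    (1 - p) * multilinear f y + p * f A ≤
      multilinear f (fun i => if i ∈ A then y i + p * (1 - y i) else y i) := by
  refine le_trans ?_ (key_strong hsub hp0 hp1 A y h0 h1)
  have : f A ≤ multilinear (fun S => f (S ∪ A)) y := by
    have := multilinear_le (f := fun _ : Finset α => f A)
      (g := fun S => f (S ∪ A)) h0 h1
      (fun S => hmono A (S ∪ A) Finset.subset_union_right)
    rwa [multilinear_const] at this
  nlinarith

lemma multilinear_mono_pt (hmono : MonotoneFn f) {y x : α → ℝ}
    (hy0 : ∀ i, 0 ≤ y i) (hx1 : ∀ i, x i ≤ 1) (hyx : ∀ i, y i ≤ x i) :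
    multilinear f y ≤ multilinear f x := by
  classical
  have key : ∀ s : Finset α, multilinear f y ≤
      multilinear f (fun i => if i ∈ s then x i else y i) := by
    intro s
    induction s using Finset.induction_on with
    | empty => simp
    | @insert e s he ih =>
      set w : α → ℝ := fun i => if i ∈ s then x i else y i with hw
      have hw0 : ∀ i, 0 ≤ w i := by
        intro i; by_cases hi : i ∈ s <;> simp [hw, hi]
        · linarith [hy0 i, hyx i]
        · exact hy0 i
      have hw1 : ∀ i, w i ≤ 1 := by
        intro i; by_cases hi : i ∈ s <;> simp [hw, hi]
        · exact hx1 i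
        · linarith [hx1 i, hyx i]
      have hnew : (fun i => if i ∈ insert e s then x i else y i)
          = Function.update w e (x e) := by
        funext i
        by_cases hi : i = e
        · subst hi; rw [Function.update_self]; simp
        · rw [Function.update_of_ne hi]
          simp only [Finset.mem_insert, hw]
          by_cases his : i ∈ s <;> simp [his, hi]
      have hwe : w e = y e := by simp [hw, he]
      -- pin both at e
      have pin1 : multilinear f w
          = w e * multilinear f (Function.update w e 1)
            + (1 - w e) * multilinear f (Function.update w e 0) := pin f w e
      have pin2 : multilinear f (Function.update w e (x e))
          = x e * multilinear f (Function.update w e 1)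
            + (1 - x e) * multilinear f (Function.update w e 0) := by
        have := pin f (Function.update w e (x e)) e
        rwa [Function.update_idem, Function.update_idem, Function.update_self] at this
      have hw00 : ∀ i, 0 ≤ Function.update w e 0 i := by
        intro i; by_cases hi : i = e
        · subst hi; simp
        · rw [Function.update_of_ne hi]; exact hw0 i
      have hw01 : ∀ i, Function.update w e 0 i ≤ 1 := by
        intro i; by_cases hi : i = e
        · subst hi; simp
        · rw [Function.update_of_ne hi]; exact hw1 i
      have hmarg : multilinear f (Function.update w e 0)
          ≤ multilinear f (Function.update w e 1) := by
        rw [shift f w e]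
        exact multilinear_le hw00 hw01 fun S =>
          hmono S (insert e S) (Finset.subset_insert e S)
      have hle : multilinear f w ≤ multilinear f (Function.update w e (x e)) := by
        rw [pin1, pin2]
        have h1 : y e ≤ x e := hyx e
        nlinarith [hwe]
      rw [hnew]
      exact le_trans ih hle
  have := key Finset.univ
  simpa using this

/-- the main induction: sampling sets `A 0, …, A (m-1)` each at rate `p`. -/
lemma main_ind (hsub : Submodular f) (hmono : MonotoneFn f) (hempty : f ∅ = 0)
    {p : ℝ} (hp0 : 0 ≤ p) (hp1 : p ≤ 1) (A : ℕ → Finset α) :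
    ∀ m : ℕ,
      ∑ t ∈ Finset.range m, p * (1 - p) ^ (m - 1 - t) * f (A t) ≤
      multilinear f
        (fun i => 1 - (1 - p) ^ (((Finset.range m).filter (fun t => i ∈ A t)).card)) := by
  intro m
  induction m with
  | zero =>
    simp only [Finset.range_zero, Finset.sum_empty, Finset.filter_empty, Finset.card_empty,
      pow_zero, sub_self]
    rw [multilinear_zero_pt, hempty]
  | succ m ih =>
    set y : α → ℝ := fun i => 1 - (1 - p) ^ (((Finset.range m).filter (fun t => i ∈ A t)).card)
      with hy
    have hq0 : (0:ℝ) ≤ 1 - p := by linarith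
    have hq1 : (1:ℝ) - p ≤ 1 := by linarith
    have hy0 : ∀ i, 0 ≤ y i := by
      intro i; simp only [hy, sub_nonneg]
      exact pow_le_one₀ hq0 hq1
    have hy1 : ∀ i, y i ≤ 1 := by
      intro i; simp only [hy]
      have := pow_nonneg hq0 (((Finset.range m).filter (fun t => i ∈ A t)).card)
      linarith
    have hpoint : (fun i => 1 - (1 - p) ^
          (((Finset.range (m+1)).filter (fun t => i ∈ A t)).card))
        = fun i => if i ∈ A m then y i + p * (1 - y i) else y i := by
      funext i
      by_cases hi : i ∈ A m
      · have : (Finset.range (m+1)).filter (fun t => i ∈ A t)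
            = insert m ((Finset.range m).filter (fun t => i ∈ A t)) := by
          rw [Finset.range_add_one, Finset.filter_insert, if_pos hi]
        rw [this, Finset.card_insert_of_notMem (by simp)]
        simp only [hy, if_pos hi]
        rw [pow_succ]
        ring
      · have : (Finset.range (m+1)).filter (fun t => i ∈ A t)
            = (Finset.range m).filter (fun t => i ∈ A t) := by
          rw [Finset.range_add_one, Finset.filter_insert, if_neg hi]
        rw [this]
        simp only [hy, if_neg hi]
    rw [hpoint]
    have hkey := key_lemma hsub hmono hp0 hp1 (A m) hy0 hy1
    have hsum : ∑ t ∈ Finset.range (m+1), p * (1 - p) ^ (m - t) * f (A t)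
        = (1 - p) * (∑ t ∈ Finset.range m, p * (1 - p) ^ (m - 1 - t) * f (A t))
          + p * f (A m) := by
      rw [Finset.sum_range_succ, Finset.mul_sum]
      have : ∀ t ∈ Finset.range m,
          (1 - p) * (p * (1 - p) ^ (m - 1 - t) * f (A t))
            = p * (1 - p) ^ (m - t) * f (A t) := by
        intro t ht
        rw [Finset.mem_range] at ht
        have : m - t = (m - 1 - t) + 1 := by omega
        rw [this, pow_succ]
        ring
      rw [Finset.sum_congr rfl this]
      simp
    have hmul : (1 - p) * (∑ t ∈ Finset.range m, p * (1 - p) ^ (m - 1 - t) * f (A t))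
        ≤ (1 - p) * multilinear f y := mul_le_mul_of_nonneg_left ih hq0
    calc ∑ t ∈ Finset.range (m+1), p * (1 - p) ^ (m + 1 - 1 - t) * f (A t)
        = (1 - p) * (∑ t ∈ Finset.range m, p * (1 - p) ^ (m - 1 - t) * f (A t))
          + p * f (A m) := by
          simp only [show m + 1 - 1 = m from rfl]
          exact hsum
      _ ≤ (1 - p) * multilinear f y + p * f (A m) := by linarith
      _ ≤ _ := hkey

lemma periodic_shift_sum {M : Type*} [AddCancelCommMonoid M] (g : ℕ → M) (T : ℕ)
    (hg : ∀ s, g (s + T) = g s) (r : ℕ) :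
    ∑ t ∈ Finset.range T, g (t + r) = ∑ t ∈ Finset.range T, g t := by
  induction r with
  | zero => simp
  | succ r ih =>
    have h1 : ∑ t ∈ Finset.range (T+1), g (t + r)
        = (∑ t ∈ Finset.range T, g (t + 1 + r)) + g r := by
      rw [Finset.sum_range_succ']
      simp
    have h2 : ∑ t ∈ Finset.range (T+1), g (t + r)
        = (∑ t ∈ Finset.range T, g (t + r)) + g (T + r) := by
      rw [Finset.sum_range_succ]
    have h3 : g (T + r) = g r := by rw [Nat.add_comm, hg]
    have h4 : (∑ t ∈ Finset.range T, g (t + 1 + r)) + g r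
        = (∑ t ∈ Finset.range T, g (t + r)) + g r := by
      rw [← h1, h2, h3]
    have h5 : ∑ t ∈ Finset.range T, g (t + 1 + r) = ∑ t ∈ Finset.range T, g (t + r) :=
      add_right_cancel h4
    calc ∑ t ∈ Finset.range T, g (t + (r+1))
        = ∑ t ∈ Finset.range T, g (t + 1 + r) := by
          refine Finset.sum_congr rfl fun t _ => by rw [show t + (r+1) = t + 1 + r by omega]
      _ = ∑ t ∈ Finset.range T, g (t + r) := h5
      _ = ∑ t ∈ Finset.range T, g t := ih

end More

section Final
variable {α : Type*} [Fintype α] [DecidableEq α]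

lemma bern {p : ℝ} (hp0 : 0 ≤ p) (hp1 : p ≤ 1) : ∀ c : ℕ, 1 - (1 - p) ^ c ≤ (c : ℝ) * p := by
  intro c
  induction c with
  | zero => simp
  | succ c ih =>
    have h1 : (1 - p) ^ c ≤ 1 := pow_le_one₀ (by linarith) (by linarith)
    have h2 : (0:ℝ) ≤ (1 - p) ^ c := pow_nonneg (by linarith) c
    have h3 : 0 ≤ p * (1 - (1 - p) ^ c) := mul_nonneg hp0 (by linarith)
    rw [pow_succ]
    push_cast
    nlinarith

theorem multilinear_average_bound' {α : Type*} [Fintype α] [DecidableEq α]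
    (f : Finset α → ℝ) (hmono : MonotoneFn f) (hsub : Submodular f) (hempty : f ∅ = 0)
    (T : ℕ) (hT : 1 ≤ T) (X : Fin T → Finset α) :
    (1 - 1 / Real.exp 1) * ((1 / (T : ℝ)) * ∑ t, f (X t)) ≤
      multilinear f (fun i =>
        (1 / (T : ℝ)) * ∑ t, (if i ∈ X t then (1 : ℝ) else 0)) := by
  classical
  have hT0 : 0 < T := hT
  have hTr : (0:ℝ) < T := Nat.cast_pos.mpr hT0
  set p : ℝ := 1 / (T:ℝ) with hp
  have hp0 : 0 ≤ p := by positivity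
  have hp1 : p ≤ 1 := by
    rw [hp, div_le_one hTr]
    exact_mod_cast hT
  have hq0 : (0:ℝ) ≤ 1 - p := by linarith
  set C : ℕ → Finset α := fun s => X ⟨s % T, Nat.mod_lt s hT0⟩ with hC
  have hCper : ∀ s, C (s + T) = C s := by
    intro s
    simp only [hC]
    congr 1
    exact Fin.ext (by simp)
  have hCX : ∀ t : Fin T, C t.val = X t := by
    intro t
    simp only [hC]
    congr 1
    exact Fin.ext (by simp [Nat.mod_eq_of_lt t.isLt])
  set cnt : α → ℕ := fun i => ((Finset.range T).filter (fun t => i ∈ C t)).card with hcnt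
  set y : α → ℝ := fun i => 1 - (1 - p) ^ (cnt i) with hy
  have hy0 : ∀ i, 0 ≤ y i := fun i => by
    simp only [hy, sub_nonneg]
    exact pow_le_one₀ hq0 (by linarith)
  -- the statement's point equals cnt * p
  have hxval : ∀ i, (1 / (T : ℝ)) * ∑ t, (if i ∈ X t then (1 : ℝ) else 0)
      = (cnt i : ℝ) * p := by
    intro i
    have h1 : ∑ t : Fin T, (if i ∈ X t then (1:ℝ) else 0)
        = ∑ s ∈ Finset.range T, (if i ∈ C s then (1:ℝ) else 0) := by
      rw [← Fin.sum_univ_eq_sum_range (fun s => if i ∈ C s then (1:ℝ) else 0) T]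
      exact Finset.sum_congr rfl fun t _ => by rw [hCX t]
    rw [h1, Finset.sum_boole]
    simp only [hcnt]
    ring
  -- monotonicity step: multilinear f y ≤ multilinear f x
  have hcntT : ∀ i, cnt i ≤ T := by
    intro i
    simp only [hcnt]
    exact le_trans (Finset.card_filter_le _ _) (by rw [Finset.card_range])
  have hx1 : ∀ i, (1 / (T : ℝ)) * ∑ t, (if i ∈ X t then (1 : ℝ) else 0) ≤ 1 := by
    intro i
    rw [hxval i, hp]
    rw [mul_one_div, div_le_one hTr]
    exact_mod_cast hcntT i
  have hyx : ∀ i, y i ≤ (1 / (T : ℝ)) * ∑ t, (if i ∈ X t then (1 : ℝ) else 0) := by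
    intro i
    rw [hxval i]
    exact bern hp0 hp1 (cnt i)
  have hmonoF : multilinear f y ≤ multilinear f (fun i =>
      (1 / (T : ℝ)) * ∑ t, (if i ∈ X t then (1 : ℝ) else 0)) :=
    multilinear_mono_pt hmono hy0 hx1 hyx
  -- per-rotation bound
  have hrot : ∀ r : ℕ,
      ∑ t ∈ Finset.range T, p * (1 - p) ^ (T - 1 - t) * f (C (t + r)) ≤ multilinear f y := by
    intro r
    have h := main_ind hsub hmono hempty hp0 hp1 (fun t => C (t + r)) T
    have hcard : ∀ i, ((Finset.range T).filter (fun t => i ∈ C (t + r))).card = cnt i := by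
      intro i
      simp only [hcnt]
      rw [Finset.card_filter, Finset.card_filter]
      exact periodic_shift_sum (fun s => if i ∈ C s then 1 else 0) T
        (fun s => by simp only [hCper]) r
    have hpt : (fun i => 1 - (1 - p) ^
        (((Finset.range T).filter (fun t => i ∈ C (t + r))).card)) = y := by
      funext i
      rw [hcard i]
    rw [hpt] at h
    exact h
  -- sum over rotations
  set Sf : ℝ := ∑ r ∈ Finset.range T, f (C r) with hSf
  have hshift : ∀ t : ℕ, ∑ r ∈ Finset.range T, f (C (t + r)) = Sf := by
    intro t
    rw [hSf]
    have := periodic_shift_sum (fun s => f (C s)) T (fun s => by show f (C (s + T)) = f (C s); rw [hCper]) t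
    rw [← this]
    exact Finset.sum_congr rfl fun r _ => by rw [Nat.add_comm]
  have hdouble : ∑ r ∈ Finset.range T, ∑ t ∈ Finset.range T,
      p * (1 - p) ^ (T - 1 - t) * f (C (t + r))
      = (∑ t ∈ Finset.range T, p * (1 - p) ^ (T - 1 - t)) * Sf := by
    rw [Finset.sum_comm, Finset.sum_mul]
    refine Finset.sum_congr rfl fun t _ => ?_
    rw [← hshift t, Finset.mul_sum]
  have hW : (∑ t ∈ Finset.range T, p * (1 - p) ^ (T - 1 - t)) = 1 - (1 - p) ^ T := by
    rw [← Finset.mul_sum]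
    have hrefl : ∑ t ∈ Finset.range T, (1 - p) ^ (T - 1 - t)
        = ∑ t ∈ Finset.range T, (1 - p) ^ t :=
      Finset.sum_range_reflect (fun k => (1 - p) ^ k) T
    rw [hrefl]
    have hg := geom_sum_mul (1 - p) T
    have : (1 - p) - 1 = -p := by ring
    rw [this] at hg
    nlinarith [hg]
  have hTFy : (1 - (1 - p) ^ T) * Sf ≤ (T : ℝ) * multilinear f y := by
    have h1 : ∑ r ∈ Finset.range T, ∑ t ∈ Finset.range T,
        p * (1 - p) ^ (T - 1 - t) * f (C (t + r))
        ≤ ∑ r ∈ Finset.range T, multilinear f y :=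
      Finset.sum_le_sum fun r _ => hrot r
    rw [hdouble, hW] at h1
    rw [Finset.sum_const, Finset.card_range, nsmul_eq_mul] at h1
    exact h1
  -- Sf equals the Fin-indexed sum, and is nonneg
  have hSfX : Sf = ∑ t, f (X t) := by
    rw [hSf, ← Fin.sum_univ_eq_sum_range (fun s => f (C s)) T]
    exact Finset.sum_congr rfl fun t _ => by rw [hCX t]
  have hSf0 : 0 ≤ Sf := by
    rw [hSf]
    refine Finset.sum_nonneg fun r _ => ?_
    rw [← hempty]
    exact hmono ∅ (C r) (Finset.empty_subset _)
  -- (1-p)^T ≤ 1/e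
  have hqT : (1 - p) ^ T ≤ 1 / Real.exp 1 := by
    have h1 : 1 - p ≤ Real.exp (-p) := by
      have := Real.add_one_le_exp (-p)
      linarith
    have h2 : (1 - p) ^ T ≤ (Real.exp (-p)) ^ T :=
      pow_le_pow_left₀ hq0 h1 T
    have h3 : (Real.exp (-p)) ^ T = Real.exp ((T : ℝ) * (-p)) := by
      rw [← Real.exp_nat_mul]
    have h4 : (T : ℝ) * (-p) = -1 := by
      rw [hp]
      field_simp
    rw [h3, h4, Real.exp_neg] at h2
    rw [one_div]
    exact h2
  -- final chain
  have hfinal : (1 - 1 / Real.exp 1) * ((1 / (T : ℝ)) * Sf) ≤ multilinear f y := by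
    have hstep : (1 - 1 / Real.exp 1) * Sf ≤ (1 - (1 - p) ^ T) * Sf := by
      apply mul_le_mul_of_nonneg_right _ hSf0
      linarith
    have h6 : (1 - 1 / Real.exp 1) * Sf ≤ (T:ℝ) * multilinear f y := le_trans hstep hTFy
    have h7 : (1 - 1 / Real.exp 1) * Sf * (1 / (T:ℝ))
        ≤ ((T:ℝ) * multilinear f y) * (1 / (T:ℝ)) :=
      mul_le_mul_of_nonneg_right h6 (by positivity)
    have h8 : ((T:ℝ) * multilinear f y) * (1 / (T:ℝ)) = multilinear f y := by
      field_simp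
    calc (1 - 1 / Real.exp 1) * ((1 / (T:ℝ)) * Sf)
        = (1 - 1 / Real.exp 1) * Sf * (1 / (T:ℝ)) := by ring
      _ ≤ _ := h7.trans_eq h8
  rw [← hSfX]
  exact le_trans hfinal hmonoF

end Final

/-- If `x` is the average of the indicator vectors of `X^1, …, X^T`, then
`F(x) ≥ (1 - 1/e)·(1/T)·Σ_t f(X^t)`. -/
theorem multilinear_average_bound {α : Type*} [Fintype α] [DecidableEq α]
    (f : Finset α → ℝ) (hmono : MonotoneFn f) (hsub : Submodular f) (hempty : f ∅ = 0)
    (T : ℕ) (hT : 1 ≤ T) (X : Fin T → Finset α) :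
    (1 - 1 / Real.exp 1) * ((1 / (T : ℝ)) * ∑ t, f (X t)) ≤
      multilinear f (fun i =>
        (1 / (T : ℝ)) * ∑ t, (if i ∈ X t then (1 : ℝ) else 0)) :=
  multilinear_average_bound' f hmono hsub hempty T hT X
end
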